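/- Set a_k := T_{k+q} for k ≥ 0 (so a_0 = 1, a_1 = 2, and (a_k) is strictly increasing). Then every integer n ≥ 1 has a unique representation n = Σ_{i≥0} ε_i a_i with digits ε_i ∈ {0,1}, all but finitely many zero, such that no q consecutive digits are all equal to 1 (i.e., ε_i + ε_{i+1} + ⋯ + ε_{i+q−1} ≤ q − 1 for every i ≥ 0). -/

import Mathlib

namespace Trib19

lemma Tpos {q : ℕ} {T : ℕ → ℕ} (hq : 2 ≤ q) (hT1 : T (q - 1) = 1)
    (hTrec : ∀ n, T (n + q) = ∑ j ∈ Finset.range q, T (n + j)) :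
    ∀ m, q - 1 ≤ m → 1 ≤ T m := by
  intro m
  induction m using Nat.strong_induction_on with
  | _ m ih =>
    intro hm
    rcases eq_or_lt_of_le hm with h | h
    · rw [← h, hT1]
    · have hmq : q ≤ m := by omega
      have hrec : T m = ∑ j ∈ Finset.range q, T (m - q + j) := by
        have := hTrec (m - q); rwa [Nat.sub_add_cancel hmq] at this
      rw [hrec]
      have h1 : 1 ≤ T (m - q + (q - 1)) := ih _ (by omega) (by omega)
      have h2 : T (m - q + (q - 1)) ≤ ∑ j ∈ Finset.range q, T (m - q + j) :=
        Finset.single_le_sum (f := fun j => T (m - q + j)) (fun i _ => Nat.zero_le _)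
          (Finset.mem_range.mpr (by omega))
      omega

lemma a_small {q : ℕ} {T : ℕ → ℕ} (hq : 2 ≤ q) (hT0 : ∀ k, k < q - 1 → T k = 0)
    (hT1 : T (q - 1) = 1)
    (hTrec : ∀ n, T (n + q) = ∑ j ∈ Finset.range q, T (n + j)) :
    ∀ k, k ≤ q - 1 → T (k + q) = 1 + ∑ i ∈ Finset.range k, T (i + q) := by
  intro k hk
  rw [hTrec k]
  have hsplit : Finset.range q = Finset.Ico 0 (q - k) ∪ Finset.Ico (q - k) q := by
    rw [Finset.range_eq_Ico, Finset.Ico_union_Ico_eq_Ico (by omega) (by omega)]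
  rw [hsplit, Finset.sum_union (by
    apply Finset.Ico_disjoint_Ico_consecutive)]
  have h1 : ∑ j ∈ Finset.Ico 0 (q - k), T (k + j) = 1 := by
    have hqk : q - k = (q - k - 1) + 1 := by omega
    rw [← Finset.range_eq_Ico, hqk, Finset.sum_range_succ]
    have hz : ∑ j ∈ Finset.range (q - k - 1), T (k + j) = 0 := by
      apply Finset.sum_eq_zero
      intro j hj
      exact hT0 _ (by simp at hj; omega)
    have hone : T (k + (q - k - 1)) = 1 := by
      have : k + (q - k - 1) = q - 1 := by omega
      rw [this, hT1]
    rw [hz, hone]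
  have h2 : ∑ j ∈ Finset.Ico (q - k) q, T (k + j) = ∑ i ∈ Finset.range k, T (i + q) := by
    rw [Finset.sum_Ico_eq_sum_range]
    have : q - (q - k) = k := by omega
    rw [this]
    apply Finset.sum_congr rfl
    intro i _
    congr 1
    omega
  rw [h1, h2]

lemma a_big {q : ℕ} {T : ℕ → ℕ} (hq : 2 ≤ q)
    (hTrec : ∀ n, T (n + q) = ∑ j ∈ Finset.range q, T (n + j)) :
    ∀ k, q ≤ k → T (k + q) = ∑ i ∈ Finset.Ico (k - q) k, T (i + q) := by
  intro k hk
  rw [hTrec k, Finset.sum_Ico_eq_sum_range]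
  have h1 : k - (k - q) = q := by omega
  rw [h1]
  apply Finset.sum_congr rfl
  intro j _
  congr 1
  omega

lemma a_lt {q : ℕ} {T : ℕ → ℕ} (hq : 2 ≤ q) (hT1 : T (q - 1) = 1)
    (hTrec : ∀ n, T (n + q) = ∑ j ∈ Finset.range q, T (n + j)) :
    ∀ k, T (k + q) < T (k + 1 + q) := by
  intro k
  rw [hTrec (k + 1)]
  have hsub : ({q - 2, q - 1} : Finset ℕ) ⊆ Finset.range q := by
    intro x hx; simp at hx ⊢; omega
  have hpair : ∑ j ∈ ({q - 2, q - 1} : Finset ℕ), T (k + 1 + j)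
      = T (k + 1 + (q - 2)) + T (k + 1 + (q - 1)) := by
    rw [Finset.sum_pair (by omega)]
  have hle : ∑ j ∈ ({q - 2, q - 1} : Finset ℕ), T (k + 1 + j)
      ≤ ∑ j ∈ Finset.range q, T (k + 1 + j) :=
    Finset.sum_le_sum_of_subset hsub
  have e1 : k + 1 + (q - 1) = k + q := by omega
  have e2 : 1 ≤ T (k + 1 + (q - 2)) := Tpos hq hT1 hTrec _ (by omega)
  rw [hpair, e1] at hle
  omega

lemma a0 {q : ℕ} {T : ℕ → ℕ} (hq : 2 ≤ q) (hT0 : ∀ k, k < q - 1 → T k = 0)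
    (hT1 : T (q - 1) = 1)
    (hTrec : ∀ n, T (n + q) = ∑ j ∈ Finset.range q, T (n + j)) :
    T q = 1 := by
  have := a_small hq hT0 hT1 hTrec 0 (by omega)
  simpa using this

lemma a_mono {q : ℕ} {T : ℕ → ℕ} (hq : 2 ≤ q) (hT1 : T (q - 1) = 1)
    (hTrec : ∀ n, T (n + q) = ∑ j ∈ Finset.range q, T (n + j)) :
    StrictMono (fun k => T (k + q)) :=
  strictMono_nat_of_lt_succ (fun k => a_lt hq hT1 hTrec k)

lemma a_ge {q : ℕ} {T : ℕ → ℕ} (hq : 2 ≤ q) (hT0 : ∀ k, k < q - 1 → T k = 0)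
    (hT1 : T (q - 1) = 1)
    (hTrec : ∀ n, T (n + q) = ∑ j ∈ Finset.range q, T (n + j)) :
    ∀ k, k + 1 ≤ T (k + q) := by
  intro k
  induction k with
  | zero => simp [a0 hq hT0 hT1 hTrec]
  | succ k ih => have := a_lt hq hT1 hTrec k; omega


lemma window_le {q : ℕ} {T : ℕ → ℕ} (hq : 2 ≤ q) (hT0 : ∀ k, k < q - 1 → T k = 0)
    (hT1 : T (q - 1) = 1)
    (hTrec : ∀ n, T (n + q) = ∑ j ∈ Finset.range q, T (n + j)) :
    ∀ m r, r ≤ q - 1 → ∑ i ∈ Finset.Ico (m - r) (m + 1), T (i + q) ≤ T (m + 1 + q) := by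
  intro m r hr
  by_cases hcase : m + 1 ≤ q - 1
  · rw [a_small hq hT0 hT1 hTrec (m + 1) hcase]
    have hsub : Finset.Ico (m - r) (m + 1) ⊆ Finset.range (m + 1) := by
      intro x hx; simp at hx ⊢; omega
    calc ∑ i ∈ Finset.Ico (m - r) (m + 1), T (i + q)
        ≤ ∑ i ∈ Finset.range (m + 1), T (i + q) :=
          Finset.sum_le_sum_of_subset hsub
      _ ≤ 1 + ∑ i ∈ Finset.range (m + 1), T (i + q) := Nat.le_add_left _ _
  · have hk : q ≤ m + 1 := by omega
    rw [a_big hq hTrec (m + 1) hk]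
    apply Finset.sum_le_sum_of_subset
    intro x hx; simp at hx ⊢; omega

lemma a_double {q : ℕ} {T : ℕ → ℕ} (hq : 2 ≤ q) (hT0 : ∀ k, k < q - 1 → T k = 0)
    (hT1 : T (q - 1) = 1)
    (hTrec : ∀ n, T (n + q) = ∑ j ∈ Finset.range q, T (n + j)) :
    ∀ k, T (k + 1 + q) ≤ 2 * T (k + q) := by
  intro k
  by_cases hcase : k + 1 ≤ q - 1
  · rw [a_small hq hT0 hT1 hTrec (k + 1) hcase, Finset.sum_range_succ,
      a_small hq hT0 hT1 hTrec k (by omega)]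
    omega
  · have hk : q ≤ k + 1 := by omega
    rw [a_big hq hTrec (k + 1) hk]
    have hsplit : ∑ i ∈ Finset.Ico (k + 1 - q) (k + 1), T (i + q)
        = ∑ i ∈ Finset.Ico (k + 1 - q) k, T (i + q) + T (k + q) :=
      Finset.sum_Ico_succ_top (by omega) _
    rw [hsplit]
    have hW := window_le hq hT0 hT1 hTrec (k - 1) (q - 2) (by omega)
    have e1 : k - 1 - (q - 2) = k + 1 - q := by omega
    have e2 : k - 1 + 1 = k := by omega
    rw [e1, e2] at hW
    omega

lemma bound {q : ℕ} {T : ℕ → ℕ} (hq : 2 ≤ q) (hT0 : ∀ k, k < q - 1 → T k = 0)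
    (hT1 : T (q - 1) = 1)
    (hTrec : ∀ n, T (n + q) = ∑ j ∈ Finset.range q, T (n + j))
    (ε : ℕ → ℕ) (hε1 : ∀ i, ε i ≤ 1)
    (hw : ∀ i, ∑ j ∈ Finset.range q, ε (i + j) ≤ q - 1) :
    ∀ k, ∑ i ∈ Finset.range k, ε i * T (i + q) < T (k + q) := by
  intro k
  induction k using Nat.strong_induction_on with
  | _ k ih =>
  match k with
  | 0 => simpa using (a0 hq hT0 hT1 hTrec) ▸ Nat.one_pos
  | (m + 1) =>
    by_cases hm : ε m = 0
    · rw [Finset.sum_range_succ, hm]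
      have := ih m (by omega)
      have := a_lt hq hT1 hTrec m
      omega
    · have hεm : ε m = 1 := by have := hε1 m; omega
      have hPex : ∃ t, t = m + 1 ∨ ε (m - t) = 0 := ⟨m + 1, Or.inl rfl⟩
      set r := Nat.find hPex with hrdef
      have hr := Nat.find_spec hPex
      have hr1 : 1 ≤ r := by
        rcases Nat.eq_zero_or_pos r with h0 | h
        · exfalso
          have := Nat.find_spec hPex
          rw [← hrdef, h0] at this
          simp at this
          omega
        · exact h
      have hrm : r ≤ m + 1 := Nat.find_le (Or.inl rfl)
      have hones : ∀ j, j < r → ε (m - j) = 1 := by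
        intro j hj
        have hmin := Nat.find_min hPex hj
        push_neg at hmin
        have := hε1 (m - j)
        omega
      have hrq : r ≤ q - 1 := by
        by_contra hcon
        push_neg at hcon
        have hqr : q ≤ r := by omega
        have hmq : q ≤ m + 1 := by omega
        have hwi := hw (m - (q - 1))
        have hsum : ∀ j ∈ Finset.range q, ε (m - (q - 1) + j) = 1 := by
          intro j hj
          simp at hj
          have e : m - (q - 1) + j = m - (q - 1 - j) := by omega
          rw [e]
          exact hones _ (by omega)
        rw [Finset.sum_congr rfl hsum] at hwi
        simp at hwi
        omega
      -- split the sum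
      have hsplit : ∑ i ∈ Finset.range (m + 1), ε i * T (i + q)
          = ∑ i ∈ Finset.range (m + 1 - r), ε i * T (i + q)
            + ∑ i ∈ Finset.Ico (m + 1 - r) (m + 1), ε i * T (i + q) := by
        rw [Finset.range_eq_Ico,
          ← Finset.sum_Ico_consecutive (fun i => ε i * T (i + q))
            (show 0 ≤ m + 1 - r from Nat.zero_le _) (show m + 1 - r ≤ m + 1 by omega),
          ← Finset.range_eq_Ico]
      have htop : ∑ i ∈ Finset.Ico (m + 1 - r) (m + 1), ε i * T (i + q)
          = ∑ i ∈ Finset.Ico (m + 1 - r) (m + 1), T (i + q) := by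
        apply Finset.sum_congr rfl
        intro i hi
        simp at hi
        have : ε i = 1 := by
          have e : i = m - (m - i) := by omega
          rw [e]
          exact hones (m - i) (by omega)
        rw [this, one_mul]
      rcases eq_or_lt_of_le hrm with hre | hrlt
      · -- r = m + 1
        have hmq2 : m + 1 ≤ q - 1 := by omega
        have hA := a_small hq hT0 hT1 hTrec (m + 1) hmq2
        rw [hsplit, htop, hre, Nat.sub_self, Finset.range_zero, Finset.sum_empty, zero_add,
          ← Finset.range_eq_Ico]
        omega
      · -- r ≤ m
        have hrm' : r ≤ m := by omega
        have hz : ε (m - r) = 0 := by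
          rcases hr with h | h
          · omega
          · exact h
        have e1 : m + 1 - r = (m - r) + 1 := by omega
        have hfirst : ∑ i ∈ Finset.range (m + 1 - r), ε i * T (i + q)
            = ∑ i ∈ Finset.range (m - r), ε i * T (i + q) := by
          rw [e1, Finset.sum_range_succ, hz]
          simp
        have hih := ih (m - r) (by omega)
        have hmerge : ∑ i ∈ Finset.Ico (m - r) (m + 1), T (i + q)
            = T (m - r + q) + ∑ i ∈ Finset.Ico (m + 1 - r) (m + 1), T (i + q) := by
          rw [e1]
          exact Finset.sum_eq_sum_Ico_succ_bot (by omega) _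
        have hW := window_le hq hT0 hT1 hTrec m r hrq
        rw [hsplit, htop, hfirst]
        omega


lemma sum_window_le {q : ℕ} (hq : 2 ≤ q) (f : ℕ → ℕ) (hf : ∀ j, f j ≤ 1)
    (j0 : ℕ) (hj0 : j0 < q) (hz : f j0 = 0) :
    ∑ j ∈ Finset.range q, f j ≤ q - 1 := by
  have hmem : j0 ∈ Finset.range q := Finset.mem_range.mpr hj0
  rw [← Finset.sum_erase_add _ _ hmem, hz, add_zero]
  calc ∑ j ∈ (Finset.range q).erase j0, f j
      ≤ ∑ j ∈ (Finset.range q).erase j0, 1 :=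
        Finset.sum_le_sum (fun i _ => hf i)
    _ = q - 1 := by
        rw [Finset.sum_const, smul_eq_mul, mul_one, Finset.card_erase_of_mem hmem,
          Finset.card_range]

lemma exists_rep {q : ℕ} {T : ℕ → ℕ} (hq : 2 ≤ q) (hT0 : ∀ k, k < q - 1 → T k = 0)
    (hT1 : T (q - 1) = 1)
    (hTrec : ∀ n, T (n + q) = ∑ j ∈ Finset.range q, T (n + j)) :
    ∀ n : ℕ, ∃ ε : ℕ → ℕ, (∀ i, ε i ≤ 1) ∧
      (∀ i, ∑ j ∈ Finset.range q, ε (i + j) ≤ q - 1) ∧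
      (∀ i, ε i ≠ 0 → T (i + q) ≤ n) ∧
      n = ∑ i ∈ Finset.range n, ε i * T (i + q) := by
  intro n
  induction n using Nat.strong_induction_on with
  | _ n ih =>
  rcases Nat.eq_zero_or_pos n with hn0 | hn
  · subst hn0
    exact ⟨fun _ => 0, fun _ => by simp, fun i => by simp,
      fun i h => absurd rfl h, by simp⟩
  · -- find greatest k with a k ≤ n
    have hPex : ∃ t, n < T (t + 1 + q) := ⟨n, by have := a_ge hq hT0 hT1 hTrec (n + 1); omega⟩
    set k := Nat.find hPex with hkdef
    have hk2 : n < T (k + 1 + q) := Nat.find_spec hPex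
    have hk1 : T (k + q) ≤ n := by
      rcases Nat.eq_zero_or_pos k with h0 | hpos
      · rw [h0]
        simpa [a0 hq hT0 hT1 hTrec] using (show 1 ≤ n from hn)
      · have := Nat.find_min hPex (show k - 1 < k by omega)
        push_neg at this
        have e : k - 1 + 1 = k := by omega
        rwa [e] at this
    set m := n - T (k + q) with hmdef
    have hmn : m < n := by
      have := a_ge hq hT0 hT1 hTrec k
      omega
    have hmak : m < T (k + q) := by
      have := a_double hq hT0 hT1 hTrec k
      omega
    obtain ⟨δ, hδ1, hwδ, hδsupp, hδsum⟩ := ih m hmn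
    have hδlt : ∀ p, δ p ≠ 0 → p < k := by
      intro p hp
      have h1 := hδsupp p hp
      have : T (p + q) < T (k + q) := by omega
      exact (a_mono hq hT1 hTrec).lt_iff_lt.mp this
    have hδm : ∀ p, δ p ≠ 0 → p < m := by
      intro p hp
      have h1 := hδsupp p hp
      have := a_ge hq hT0 hT1 hTrec p
      omega
    refine ⟨fun i => if i = k then 1 else δ i, ?_, ?_, ?_, ?_⟩
    · intro i
      by_cases h : i = k <;> simp [h, hδ1 i]
    · -- window
      intro i
      by_cases hik : i ≤ k ∧ k < i + q
      · by_cases htop : k < i + (q - 1)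
        · -- the top entry of the window is above k, hence zero
          apply sum_window_le hq _ (fun j => by
            by_cases h : i + j = k <;> simp [h, hδ1 _]) (q - 1) (by omega)
          have hne : ¬(i + (q - 1) = k) := by omega
          show (if i + (q - 1) = k then 1 else δ (i + (q - 1))) = 0
          rw [if_neg hne]
          by_contra hcon
          exact absurd (hδlt _ hcon) (by omega)
        · -- window is [k+1-q, k]
          have hik2 : i + (q - 1) = k := by omega
          by_contra hcon
          push_neg at hcon
          have hall : ∀ j, j < q → (if i + j = k then 1 else δ (i + j)) = 1 := by
            by_contra hc2
            push_neg at hc2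
            obtain ⟨j0, hj0q, hj0⟩ := hc2
            have hz : (if i + j0 = k then 1 else δ (i + j0)) = 0 := by
              by_cases h : i + j0 = k
              · simp [h] at hj0
              · simp [h] at hj0 ⊢
                have := hδ1 (i + j0); omega
            have hle := sum_window_le hq (fun j => if i + j = k then 1 else δ (i + j))
              (fun j => by by_cases h : i + j = k <;> simp [h, hδ1 _]) j0 hj0q hz
            beta_reduce at hle
            omega
          have hδall : ∀ p, i ≤ p → p < k → δ p = 1 := by
            intro p hp1 hp2
            have := hall (p - i) (by omega)
            have e : i + (p - i) = p := by omega
            rw [e] at this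
            simpa [show ¬(p = k) by omega] using this
          -- m ≥ sum over Ico i k of a
          have hsub : Finset.Ico i k ⊆ Finset.range m := by
            intro p hp
            simp only [Finset.mem_Ico] at hp
            have : δ p = 1 := hδall p hp.1 hp.2
            exact Finset.mem_range.mpr (hδm p (by omega))
          have hmge : ∑ p ∈ Finset.Ico i k, T (p + q) ≤ m := by
            calc ∑ p ∈ Finset.Ico i k, T (p + q)
                = ∑ p ∈ Finset.Ico i k, δ p * T (p + q) := by
                  apply Finset.sum_congr rfl
                  intro p hp
                  simp only [Finset.mem_Ico] at hp
                  rw [hδall p hp.1 hp.2, one_mul]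
              _ ≤ ∑ p ∈ Finset.range m, δ p * T (p + q) :=
                  Finset.sum_le_sum_of_subset hsub
              _ = m := hδsum.symm
          have hkq : q ≤ k + 1 := by omega
          have hbig := a_big hq hTrec (k + 1) hkq
          have hsplitk : ∑ p ∈ Finset.Ico (k + 1 - q) (k + 1), T (p + q)
              = ∑ p ∈ Finset.Ico (k + 1 - q) k, T (p + q) + T (k + q) :=
            Finset.sum_Ico_succ_top (by omega) _
          have hi : i = k + 1 - q := by omega
          rw [hsplitk] at hbig
          rw [← hi] at hbig
          omega
      · -- window misses k
        push_neg at hik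
        have : ∀ j ∈ Finset.range q, (if i + j = k then 1 else δ (i + j)) = δ (i + j) := by
          intro j hj
          simp only [Finset.mem_range] at hj
          have : ¬(i + j = k) := by
            intro h
            rcases Nat.lt_or_ge i (k + 1) with h1 | h1
            · have := hik (by omega); omega
            · omega
          simp [this]
        rw [Finset.sum_congr rfl this]
        exact hwδ i
    · intro i hi
      by_cases h : i = k
      · subst h; exact hk1
      · simp only [h, if_neg, if_false] at hi
        have := hδsupp i (by simpa using hi)
        omega
    · -- the sum
      have hkn : k < n := by
        have := a_ge hq hT0 hT1 hTrec k
        omega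
      have h1 : ∑ i ∈ Finset.range n, (if i = k then 1 else δ i) * T (i + q)
          = ∑ i ∈ Finset.range n, (δ i * T (i + q) + if i = k then T (k + q) else 0) := by
        apply Finset.sum_congr rfl
        intro i _
        by_cases h : i = k
        · have hδk : δ k = 0 := by
            by_contra hc
            have := hδsupp k hc
            omega
          simp [h, hδk]
        · simp [h]
      rw [h1, Finset.sum_add_distrib, Finset.sum_ite_eq' (Finset.range n) k,
        if_pos (Finset.mem_range.mpr hkn)]
      have h2 : ∑ i ∈ Finset.range n, δ i * T (i + q) = m := by
        rw [Finset.range_eq_Ico,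
          ← Finset.sum_Ico_consecutive (fun i => δ i * T (i + q))
            (show 0 ≤ m from Nat.zero_le _) (show m ≤ n by omega),
          ← Finset.range_eq_Ico]
        have hz : ∑ i ∈ Finset.Ico m n, δ i * T (i + q) = 0 := by
          apply Finset.sum_eq_zero
          intro p hp
          simp only [Finset.mem_Ico] at hp
          have : δ p = 0 := by
            by_contra hc
            have := hδm p hc
            omega
          simp [this]
        rw [hz, add_zero, ← hδsum]
      rw [h2]
      omega


lemma no_cross {q : ℕ} {T : ℕ → ℕ} (hq : 2 ≤ q) (hT0 : ∀ k, k < q - 1 → T k = 0)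
    (hT1 : T (q - 1) = 1)
    (hTrec : ∀ n, T (n + q) = ∑ j ∈ Finset.range q, T (n + j))
    (ε δ : ℕ → ℕ) (hε1 : ∀ i, ε i ≤ 1) (hδ1 : ∀ i, δ i ≤ 1)
    (hwδ : ∀ i, ∑ j ∈ Finset.range q, δ (i + j) ≤ q - 1)
    (k : ℕ) (hek : ε k = 1) (hdk : δ k = 0)
    (h : ∑ i ∈ Finset.range (k + 1), ε i * T (i + q)
        = ∑ i ∈ Finset.range (k + 1), δ i * T (i + q)) : False := by
  have hR : ∑ i ∈ Finset.range (k + 1), δ i * T (i + q) < T (k + q) := by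
    rw [Finset.sum_range_succ, hdk, zero_mul, add_zero]
    exact bound hq hT0 hT1 hTrec δ hδ1 hwδ k
  have hL : T (k + q) ≤ ∑ i ∈ Finset.range (k + 1), ε i * T (i + q) := by
    calc T (k + q) = ε k * T (k + q) := by rw [hek, one_mul]
      _ ≤ _ := Finset.single_le_sum (f := fun i => ε i * T (i + q))
          (fun i _ => Nat.zero_le _) (Finset.self_mem_range_succ k)
  omega

lemma unique_rep {q : ℕ} {T : ℕ → ℕ} (hq : 2 ≤ q) (hT0 : ∀ k, k < q - 1 → T k = 0)
    (hT1 : T (q - 1) = 1)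
    (hTrec : ∀ n, T (n + q) = ∑ j ∈ Finset.range q, T (n + j))
    (ε δ : ℕ → ℕ)
    (hfε : (Function.support ε).Finite) (hfδ : (Function.support δ).Finite)
    (hε1 : ∀ i, ε i ≤ 1) (hδ1 : ∀ i, δ i ≤ 1)
    (hwε : ∀ i, ∑ j ∈ Finset.range q, ε (i + j) ≤ q - 1)
    (hwδ : ∀ i, ∑ j ∈ Finset.range q, δ (i + j) ≤ q - 1)
    (hsum : ∑ᶠ i, ε i * T (i + q) = ∑ᶠ i, δ i * T (i + q)) : ε = δ := by
  by_contra hne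
  set N := (hfε.toFinset ∪ hfδ.toFinset).sup id + 1 with hNdef
  have hsuppN : ∀ p, ε p ≠ 0 ∨ δ p ≠ 0 → p < N := by
    intro p hp
    have hmem : p ∈ hfε.toFinset ∪ hfδ.toFinset := by
      rcases hp with h | h
      · exact Finset.mem_union_left _ (by simpa using h)
      · exact Finset.mem_union_right _ (by simpa using h)
    have := Finset.le_sup (f := id) hmem
    simp only [id] at this
    omega
  have hfs : ∀ (f : ℕ → ℕ), (∀ p, f p ≠ 0 → p < N) →
      ∑ᶠ i, f i * T (i + q) = ∑ i ∈ Finset.range N, f i * T (i + q) := by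
    intro f hf
    apply finsum_eq_sum_of_support_subset
    intro p hp
    simp only [Function.mem_support] at hp
    have : f p ≠ 0 := by
      intro h0; rw [h0, zero_mul] at hp; exact hp rfl
    simpa using hf p this
  have hsum' : ∑ i ∈ Finset.range N, ε i * T (i + q)
      = ∑ i ∈ Finset.range N, δ i * T (i + q) := by
    rw [← hfs ε (fun p hp => hsuppN p (Or.inl hp)), ← hfs δ (fun p hp => hsuppN p (Or.inr hp))]
    exact hsum
  -- the finset of disagreement
  set s : Finset ℕ := (Finset.range N).filter (fun i => ε i ≠ δ i) with hsdef
  have hs : s.Nonempty := by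
    obtain ⟨i0, hi0⟩ := Function.ne_iff.mp hne
    refine ⟨i0, ?_⟩
    simp only [hsdef, Finset.mem_filter, Finset.mem_range]
    refine ⟨?_, hi0⟩
    apply hsuppN
    by_cases h : ε i0 = 0
    · right; rw [h] at hi0; exact fun hc => hi0 hc.symm
    · left; exact h
  set k := s.max' hs with hkdef
  have hks : k ∈ s := s.max'_mem hs
  have hkN : k < N := by
    have := hks; simp only [hsdef, Finset.mem_filter, Finset.mem_range] at this; exact this.1
  have hkne : ε k ≠ δ k := by
    have := hks; simp only [hsdef, Finset.mem_filter] at this; exact this.2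
  have hagree : ∀ i, k < i → ε i = δ i := by
    intro i hi
    by_contra hc
    rcases Nat.lt_or_ge i N with h1 | h1
    · have : i ∈ s := by simp only [hsdef, Finset.mem_filter, Finset.mem_range]; exact ⟨h1, hc⟩
      have := Finset.le_max' s i this
      omega
    · have h2 : ε i = 0 := by
        by_contra h3
        have := hsuppN i (Or.inl h3); omega
      have h3 : δ i = 0 := by
        by_contra h3
        have := hsuppN i (Or.inr h3); omega
      rw [h2, h3] at hc; exact hc rfl
  have hpart : ∑ i ∈ Finset.range (k + 1), ε i * T (i + q)
      = ∑ i ∈ Finset.range (k + 1), δ i * T (i + q) := by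
    have hsplitε : ∑ i ∈ Finset.range N, ε i * T (i + q)
        = ∑ i ∈ Finset.range (k + 1), ε i * T (i + q)
          + ∑ i ∈ Finset.Ico (k + 1) N, ε i * T (i + q) := by
      rw [Finset.range_eq_Ico,
        ← Finset.sum_Ico_consecutive (fun i => ε i * T (i + q))
          (show 0 ≤ k + 1 from Nat.zero_le _) (show k + 1 ≤ N by omega),
        ← Finset.range_eq_Ico]
    have hsplitδ : ∑ i ∈ Finset.range N, δ i * T (i + q)
        = ∑ i ∈ Finset.range (k + 1), δ i * T (i + q)
          + ∑ i ∈ Finset.Ico (k + 1) N, δ i * T (i + q) := by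
      rw [Finset.range_eq_Ico,
        ← Finset.sum_Ico_consecutive (fun i => δ i * T (i + q))
          (show 0 ≤ k + 1 from Nat.zero_le _) (show k + 1 ≤ N by omega),
        ← Finset.range_eq_Ico]
    have htail : ∑ i ∈ Finset.Ico (k + 1) N, ε i * T (i + q)
        = ∑ i ∈ Finset.Ico (k + 1) N, δ i * T (i + q) := by
      apply Finset.sum_congr rfl
      intro i hi
      simp only [Finset.mem_Ico] at hi
      rw [hagree i (by omega)]
    rw [hsplitε, hsplitδ, htail] at hsum'
    omega
  have hεk := hε1 k
  have hδk := hδ1 k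
  interval_cases h1 : ε k <;> interval_cases h2 : δ k
  · exact hkne (by omega)
  · exact no_cross hq hT0 hT1 hTrec δ ε hδ1 hε1 hwε k h2 h1 hpart.symm
  · exact no_cross hq hT0 hT1 hTrec ε δ hε1 hδ1 hwδ k h1 h2 hpart
  · exact hkne (by omega)

end Trib19


/-- Fix `q ≥ 2`, let `T` be the generalized tribonacci sequence
(fundamental recurrence of `x^q − x^{q−1} − ⋯ − x − 1`), and set `a_k = T_{k+q}`.
Every integer `n ≥ 1` has a unique representation `n = Σᶠ i, ε i * a i` with digits
`ε i ∈ {0,1}`, all but finitely many zero, such that no `q` consecutive digits are all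
equal to `1`. -/
theorem tribonacci_q_representation_existsUnique
    (q : ℕ) (hq : 2 ≤ q) (T : ℕ → ℕ)
    (hT0 : ∀ k, k < q - 1 → T k = 0)
    (hT1 : T (q - 1) = 1)
    (hTrec : ∀ n, T (n + q) = ∑ j ∈ Finset.range q, T (n + j))
    (n : ℕ) (hn : 1 ≤ n) :
    ∃! ε : ℕ → ℕ,
      (Function.support ε).Finite ∧
      (∀ i, ε i ≤ 1) ∧
      (∀ i, ∑ j ∈ Finset.range q, ε (i + j) ≤ q - 1) ∧
      n = ∑ᶠ i, ε i * T (i + q) := by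
  
  obtain ⟨ε, hε1, hw, hsupp, hsum⟩ := Trib19.exists_rep hq hT0 hT1 hTrec n
  have hεN : ∀ p, ε p ≠ 0 → p < n := by
    intro p hp
    have h1 := hsupp p hp
    have := Trib19.a_ge hq hT0 hT1 hTrec p
    omega
  have hfin : (Function.support ε).Finite := by
    apply Set.Finite.subset (Set.finite_Iio n)
    intro p hp
    exact hεN p hp
  have hfsum : ∑ᶠ i, ε i * T (i + q) = ∑ i ∈ Finset.range n, ε i * T (i + q) := by
    apply finsum_eq_sum_of_support_subset
    intro p hp
    simp only [Function.mem_support] at hp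
    have : ε p ≠ 0 := fun h0 => by rw [h0, zero_mul] at hp; exact hp rfl
    simpa using hεN p this
  refine ⟨ε, ⟨hfin, hε1, hw, by rw [hfsum]; exact hsum⟩, ?_⟩
  rintro δ ⟨hfδ, hδ1, hwδ, hsδ⟩
  exact Trib19.unique_rep hq hT0 hT1 hTrec δ ε hfδ hfin hδ1 hε1 hwδ hw
    (by rw [← hsδ, hfsum]; exact hsum)
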